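/- arXiv:1110.2602 — 4 statements merged into one kernel-verified Lean document; each statement's English description precedes it below -/
import Mathlib

section
/- Let f, g : (0,∞) → (0,∞), let γ > 1 and ε ∈ (0,1) be real numbers, and suppose there exists R > e^e such that f(r) ≤ (log(γ·r))^{1+(log(log r))^{ε−1}} · g(γ·r) for all r ≥ R. Then limsup_{r→∞} log f(r)/log r ≤ limsup_{r→∞} log g(r)/log r, where the limsups are taken in the extended real numbers. -/
open Real Filter

private lemma aux_tendsto (γ K : ℝ) (hγ : 1 < γ) :
    Tendsto (fun r : ℝ => (2 * Real.log (Real.log (γ * r)) + K) / Real.log r)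
      atTop (nhds 0) := by
  have hγ0 : (0 : ℝ) < γ := by linarith
  have hγr : Tendsto (fun r : ℝ => γ * r) atTop atTop :=
    Tendsto.const_mul_atTop hγ0 tendsto_id
  have hlogγr : Tendsto (fun r : ℝ => Real.log (γ * r)) atTop atTop :=
    Real.tendsto_log_atTop.comp hγr
  have h0 : Tendsto (fun x : ℝ => Real.log x / x) atTop (nhds 0) :=
    Real.isLittleO_log_id_atTop.tendsto_div_nhds_zero
  have hA : Tendsto (fun r : ℝ => Real.log (Real.log (γ * r)) / Real.log (γ * r))
      atTop (nhds 0) := h0.comp hlogγr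
  have hinv : Tendsto (fun r : ℝ => (Real.log r)⁻¹) atTop (nhds 0) :=
    Real.tendsto_log_atTop.inv_tendsto_atTop
  have hB : Tendsto (fun r : ℝ => Real.log (γ * r) / Real.log r) atTop (nhds 1) := by
    have h : Tendsto (fun r : ℝ => Real.log γ * (Real.log r)⁻¹ + 1) atTop
        (nhds (Real.log γ * 0 + 1)) := ((hinv.const_mul _).add tendsto_const_nhds)
    rw [mul_zero, zero_add] at h
    refine h.congr' ?_
    filter_upwards [eventually_gt_atTop 1] with r hr
    have hr0 : (0 : ℝ) < r := by linarith
    have hlr : Real.log r ≠ 0 := ne_of_gt (Real.log_pos hr)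
    rw [Real.log_mul (ne_of_gt hγ0) (ne_of_gt hr0)]
    field_simp
  have hK : Tendsto (fun r : ℝ => K * (Real.log r)⁻¹) atTop (nhds (K * 0)) :=
    hinv.const_mul K
  rw [mul_zero] at hK
  have hmain : Tendsto (fun r : ℝ =>
      2 * (Real.log (Real.log (γ * r)) / Real.log (γ * r)) *
        (Real.log (γ * r) / Real.log r) + K * (Real.log r)⁻¹) atTop
      (nhds (2 * 0 * 1 + 0)) := (((hA.const_mul 2).mul hB).add hK)
  rw [mul_zero, zero_mul, zero_add] at hmain
  refine hmain.congr' ?_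
  filter_upwards [eventually_gt_atTop 1] with r hr
  have hr0 : (0 : ℝ) < r := by linarith
  have hlr : (0 : ℝ) < Real.log r := Real.log_pos hr
  have hlγr : (0 : ℝ) < Real.log (γ * r) :=
    Real.log_pos (by nlinarith)
  field_simp

/-- Growth comparison: if `f(r) ≤ (log(γr))^{1+(log log r)^{ε−1}} · g(γr)` for
all large `r`, then the order of `f` is at most the order of `g`
(limsups in the extended reals). -/
theorem stmt_3 (f g : ℝ → ℝ) (γ ε : ℝ) (hγ : 1 < γ) (hε : ε ∈ Set.Ioo (0 : ℝ) 1)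
    (hf : ∀ r > (0 : ℝ), 0 < f r) (hg : ∀ r > (0 : ℝ), 0 < g r)
    (hyp : ∃ R : ℝ, Real.exp (Real.exp 1) < R ∧ ∀ r : ℝ, R ≤ r →
      f r ≤ (Real.log (γ * r)) ^ (1 + (Real.log (Real.log r)) ^ (ε - 1))
        * g (γ * r)) :
    Filter.limsup (fun r : ℝ => ((Real.log (f r) / Real.log r : ℝ) : EReal)) atTop
      ≤ Filter.limsup (fun r : ℝ => ((Real.log (g r) / Real.log r : ℝ) : EReal)) atTop := by
  obtain ⟨R, hR1, hR⟩ := hyp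
  have hγ0 : (0 : ℝ) < γ := by linarith
  set L := Filter.limsup (fun r : ℝ => ((Real.log (g r) / Real.log r : ℝ) : EReal)) atTop
  refine le_of_forall_gt_imp_ge_of_dense fun x hx => ?_
  obtain ⟨c, hLc, hcx⟩ := EReal.exists_between_coe_real hx
  refine le_trans ?_ hcx.le
  -- now show limsup f-quotient ≤ c
  have hev : ∀ᶠ s in atTop, Real.log (g s) / Real.log s < c := by
    have := Filter.eventually_lt_of_limsup_lt hLc
    filter_upwards [this] with s hs
    exact_mod_cast hs
  obtain ⟨S, hS⟩ := eventually_atTop.mp hev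
  refine le_of_forall_gt_imp_ge_of_dense fun y hy => ?_
  obtain ⟨c', hcc', hc'y⟩ := EReal.exists_between_coe_real hy
  refine le_trans ?_ hc'y.le
  rw [EReal.coe_lt_coe_iff] at hcc'
  set δ := c' - c with hδ
  have hδ0 : 0 < δ := by simp [hδ]; linarith
  have htend := aux_tendsto γ (|c| * Real.log γ) hγ
  have hsmall : ∀ᶠ r : ℝ in atTop,
      (2 * Real.log (Real.log (γ * r)) + |c| * Real.log γ) / Real.log r < δ :=
    htend.eventually_lt_const hδ0
  refine Filter.limsup_le_of_le (by isBoundedDefault) ?_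
  have hee : (1 : ℝ) < Real.exp (Real.exp 1) := by
    have : (1 : ℝ) < Real.exp 1 := by
      have := Real.exp_one_gt_d9; linarith
    calc (1 : ℝ) < Real.exp 1 := this
    _ < Real.exp (Real.exp 1) := Real.exp_lt_exp.mpr (by linarith [Real.exp_one_gt_d9])
  filter_upwards [eventually_ge_atTop R, eventually_ge_atTop S,
      eventually_ge_atTop (max 2 (Real.exp (Real.exp 1))), hsmall] with r hrR hrS hr2 hsm
  have hre : Real.exp (Real.exp 1) ≤ r := le_trans (le_max_right _ _) hr2
  have hr1 : (1 : ℝ) < r := lt_of_lt_of_le hee hre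
  have hr0 : (0 : ℝ) < r := by linarith
  have hlr : (0 : ℝ) < Real.log r := Real.log_pos hr1
  -- log r ≥ e, so log log r ≥ 1
  have hlre : Real.exp 1 ≤ Real.log r := by
    calc Real.exp 1 = Real.log (Real.exp (Real.exp 1)) := (Real.log_exp _).symm
    _ ≤ Real.log r := Real.log_le_log (Real.exp_pos _) hre
  have hllr : (1 : ℝ) ≤ Real.log (Real.log r) := by
    calc (1 : ℝ) = Real.log (Real.exp 1) := (Real.log_exp 1).symm
    _ ≤ Real.log (Real.log r) := Real.log_le_log (Real.exp_pos _) hlre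
  have hγr1 : (1 : ℝ) < γ * r := by nlinarith
  have hγr0 : (0 : ℝ) < γ * r := by linarith
  have hlγr : (0 : ℝ) < Real.log (γ * r) := Real.log_pos hγr1
  have hlrlγr : Real.log r ≤ Real.log (γ * r) := Real.log_le_log hr0 (by nlinarith)
  have hllγr : (1 : ℝ) ≤ Real.log (Real.log (γ * r)) := by
    calc (1 : ℝ) = Real.log (Real.exp 1) := (Real.log_exp 1).symm
    _ ≤ Real.log (Real.log (γ * r)) :=
        Real.log_le_log (Real.exp_pos _) (le_trans hlre hlrlγr)
  set p := 1 + (Real.log (Real.log r)) ^ (ε - 1) with hp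
  have hp2 : p ≤ 2 := by
    have : (Real.log (Real.log r)) ^ (ε - 1) ≤ 1 :=
      Real.rpow_le_one_of_one_le_of_nonpos hllr (by linarith [hε.2])
    simp [hp]; linarith
  have hp0 : 0 ≤ p := by
    have : (0 : ℝ) ≤ (Real.log (Real.log r)) ^ (ε - 1) :=
      Real.rpow_nonneg (by linarith) _
    simp [hp]; linarith
  have hfr : 0 < f r := hf r hr0
  have hgγr : 0 < g (γ * r) := hg (γ * r) hγr0
  have hbound := hR r hrR
  have hrpow : (0 : ℝ) < (Real.log (γ * r)) ^ p := Real.rpow_pos_of_pos hlγr p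
  -- take logs
  have hlog1 : Real.log (f r) ≤ p * Real.log (Real.log (γ * r)) + Real.log (g (γ * r)) := by
    calc Real.log (f r) ≤ Real.log ((Real.log (γ * r)) ^ p * g (γ * r)) :=
          Real.log_le_log hfr hbound
    _ = Real.log ((Real.log (γ * r)) ^ p) + Real.log (g (γ * r)) :=
          Real.log_mul (ne_of_gt hrpow) (ne_of_gt hgγr)
    _ = p * Real.log (Real.log (γ * r)) + Real.log (g (γ * r)) := by
          rw [Real.log_rpow hlγr]
  -- bound on g at γ r
  have hgb : Real.log (g (γ * r)) < c * Real.log (γ * r) := by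
    have := hS (γ * r) (le_trans hrS (by nlinarith))
    exact (div_lt_iff₀ hlγr).mp this
  have hlog2 : Real.log (f r) ≤
      2 * Real.log (Real.log (γ * r)) + |c| * Real.log γ + c * Real.log r := by
    have h1 : p * Real.log (Real.log (γ * r)) ≤ 2 * Real.log (Real.log (γ * r)) := by
      apply mul_le_mul_of_nonneg_right hp2 (by linarith)
    have h2 : c * Real.log (γ * r) = c * Real.log γ + c * Real.log r := by
      rw [Real.log_mul (ne_of_gt hγ0) (ne_of_gt hr0)]; ring
    have h3 : c * Real.log γ ≤ |c| * Real.log γ := by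
      apply mul_le_mul_of_nonneg_right (le_abs_self c)
      exact Real.log_nonneg hγ.le
    linarith
  have hfinal : Real.log (f r) / Real.log r < c' := by
    have hdiv : Real.log (f r) / Real.log r ≤
        (2 * Real.log (Real.log (γ * r)) + |c| * Real.log γ) / Real.log r + c := by
      rw [div_add' _ _ _ (ne_of_gt hlr)]
      gcongr
    calc Real.log (f r) / Real.log r ≤ _ := hdiv
    _ < δ + c := by linarith
    _ = c' := by simp [hδ]
  exact_mod_cast hfinal.le
end

section
/- Let ρ : (0,∞) → ℝ be differentiable with ρ(r) → ϱ ∈ ℝ and r·(log r)·ρ'(r) → 0 as r → ∞. Let f, g : (0,∞) → (0,∞), let (r_m) be a sequence of positive reals tending to +∞ such that g(r_m)/r_m^{ρ(r_m)} → σ ∈ (0,∞), let α₀ > 0 and let a ∈ (0,∞) with limsup_{m→∞} f(α₀·r_m)/g(r_m) ≥ a. Then limsup_{r→∞} f(r)/r^{ρ(r)} ≥ a·σ/α₀^ϱ. -/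
open Real Filter

/-- If `ρ` is a proximate order, then `log x * (ρ (α₀ x) - ρ x) → 0`. -/
lemma slowkey_aux (ρ : ℝ → ℝ)
    (hdiff : ∀ x > (0 : ℝ), DifferentiableAt ℝ ρ x)
    (hslow : Tendsto (fun x : ℝ => x * Real.log x * deriv ρ x) atTop (nhds 0))
    (α₀ : ℝ) (hα₀ : 0 < α₀) :
    Tendsto (fun x : ℝ => Real.log x * (ρ (α₀ * x) - ρ x)) atTop (nhds 0) := by
  rcases eq_or_ne α₀ 1 with h1 | h1
  · simpa [h1] using tendsto_const_nhds
  set c : ℝ := min 1 α₀ with hc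
  have hcpos : 0 < c := lt_min one_pos hα₀
  have hc1 : c ≤ 1 := min_le_left _ _
  have hcα : c ≤ α₀ := min_le_right _ _
  rw [Metric.tendsto_atTop] at hslow ⊢
  intro ε hε
  set δ : ℝ := ε * c / (2 * (|α₀ - 1| + 1)) with hδdef
  have hδ : 0 < δ := by positivity
  obtain ⟨N, hN⟩ := hslow δ hδ
  refine ⟨max ((|N| + 1) / c) (Real.exp (2 * |Real.log c| + 2)), fun x hx => ?_⟩
  have hx1 : (|N| + 1) / c ≤ x := le_trans (le_max_left _ _) hx
  have hx2 : Real.exp (2 * |Real.log c| + 2) ≤ x := le_trans (le_max_right _ _) hx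
  have hxpos : 0 < x := lt_of_lt_of_le (Real.exp_pos _) hx2
  have hcxN : N ≤ c * x := by
    have : |N| + 1 ≤ c * x := by
      rw [div_le_iff₀ hcpos] at hx1
      linarith [mul_comm x c]
    calc N ≤ |N| := le_abs_self N
      _ ≤ c * x := by linarith
  have hlogx : 2 * |Real.log c| + 2 ≤ Real.log x := by
    rw [← Real.log_exp (2 * |Real.log c| + 2)]
    exact Real.log_le_log (Real.exp_pos _) hx2
  have hlogxpos : 0 < Real.log x := lt_of_lt_of_le (by positivity) hlogx
  -- Mean value theorem on the interval between `x` and `α₀ * x`.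
  have hmvt : ∃ ξ, c * x ≤ ξ ∧ ρ (α₀ * x) - ρ x = deriv ρ ξ * (α₀ * x - x) := by
    have key : ∀ p q : ℝ, c * x ≤ p → p < q →
        ∃ ξ, c * x ≤ ξ ∧ ρ q - ρ p = deriv ρ ξ * (q - p) := by
      intro p q hp hpq
      have hppos : 0 < p := lt_of_lt_of_le (by positivity) hp
      have hcont : ContinuousOn ρ (Set.Icc p q) := fun y hy =>
        ((hdiff y (lt_of_lt_of_le hppos hy.1)).continuousAt).continuousWithinAt
      have hdiffOn : DifferentiableOn ℝ ρ (Set.Ioo p q) := fun y hy =>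
        (hdiff y (lt_trans hppos hy.1)).differentiableWithinAt
      obtain ⟨ξ, hξ, hξeq⟩ := exists_deriv_eq_slope ρ hpq hcont hdiffOn
      refine ⟨ξ, le_trans hp hξ.1.le, ?_⟩
      rw [hξeq, div_mul_cancel₀]
      exact sub_ne_zero.2 (ne_of_gt hpq)
    rcases lt_or_gt_of_ne h1 with h | h
    · -- α₀ < 1 : interval (α₀ x, x)
      have hcx : c * x ≤ α₀ * x := by
        apply mul_le_mul_of_nonneg_right hcα hxpos.le
      have hlt : α₀ * x < x := by nlinarith
      obtain ⟨ξ, hξ1, hξ2⟩ := key (α₀ * x) x hcx hlt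
      exact ⟨ξ, hξ1, by linarith [hξ2]⟩
    · -- 1 < α₀ : interval (x, α₀ x)
      have hcx : c * x ≤ x := by nlinarith
      have hlt : x < α₀ * x := by nlinarith
      obtain ⟨ξ, hξ1, hξ2⟩ := key x (α₀ * x) hcx hlt
      exact ⟨ξ, hξ1, hξ2⟩
  obtain ⟨ξ, hξcx, hξeq⟩ := hmvt
  have hξpos : 0 < ξ := lt_of_lt_of_le (by positivity) hξcx
  have hξN : N ≤ ξ := le_trans hcxN hξcx
  have hξδ : |ξ * Real.log ξ * deriv ρ ξ| < δ := by
    have := hN ξ hξN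
    rwa [Real.dist_eq, sub_zero] at this
  -- lower bound on log ξ
  have hlogc : Real.log c + Real.log x ≤ Real.log ξ := by
    rw [← Real.log_mul (ne_of_gt hcpos) (ne_of_gt hxpos)]
    exact Real.log_le_log (by positivity) hξcx
  have hlogξ : Real.log x / 2 ≤ Real.log ξ := by
    have h1 : -|Real.log c| ≤ Real.log c := neg_abs_le _
    linarith
  have hlogξpos : 0 < Real.log ξ := lt_of_lt_of_le (by linarith) hlogξ
  -- assemble the estimate
  rw [Real.dist_eq, sub_zero, hξeq]
  have hE : |deriv ρ ξ| * (ξ * Real.log ξ) < δ := by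
    calc |deriv ρ ξ| * (ξ * Real.log ξ) = |ξ * Real.log ξ * deriv ρ ξ| := by
          rw [abs_mul, abs_of_pos (by positivity : (0:ℝ) < ξ * Real.log ξ)]; ring
      _ < δ := hξδ
  have habs : |Real.log x * (deriv ρ ξ * (α₀ * x - x))| =
      Real.log x * |deriv ρ ξ| * (|α₀ - 1| * x) := by
    have h2 : |α₀ * x - x| = |α₀ - 1| * x := by
      rw [show α₀ * x - x = (α₀ - 1) * x by ring, abs_mul, abs_of_pos hxpos]
    rw [abs_mul, abs_mul, abs_of_pos hlogxpos, h2]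
    ring
  rw [habs]
  -- `ξ * log ξ ≥ c x * log x / 2`
  have hξlog : c * x * (Real.log x / 2) ≤ ξ * Real.log ξ := by
    have := mul_le_mul hξcx hlogξ (by positivity) hξpos.le
    linarith [this]
  have hEpos : 0 ≤ |deriv ρ ξ| := abs_nonneg _
  have hmain : |deriv ρ ξ| * (c * x * (Real.log x / 2)) < δ :=
    lt_of_le_of_lt (mul_le_mul_of_nonneg_left hξlog hEpos) hE
  have hA : (0:ℝ) < |α₀ - 1| := abs_pos.2 (sub_ne_zero.2 h1)
  have step1 : |deriv ρ ξ| * x * Real.log x < 2 * δ / c := by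
    rw [lt_div_iff₀ hcpos]
    nlinarith [hmain]
  have hfrac : 2 * δ / c = ε / (|α₀ - 1| + 1) := by
    rw [hδdef]; field_simp
  rw [hfrac] at step1
  have hq : ε / (|α₀ - 1| + 1) * (|α₀ - 1| + 1) = ε :=
    div_mul_cancel₀ _ (by positivity)
  have hqpos : 0 < ε / (|α₀ - 1| + 1) := by positivity
  nlinarith [mul_lt_mul_of_pos_left step1 hA]

/-- Equation (2.2) in the proof of Corollary 2.5: if `g(r_m)/r_m^{ρ(r_m)} → σ`
and `limsup f(α₀ r_m)/g(r_m) ≥ a > 0`, then the type of `f` with respect to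
the proximate order `ρ` is at least `a·σ/α₀^ϱ`. -/
theorem stmt_7 (ρ : ℝ → ℝ) (ϱ : ℝ)
    (hdiff : ∀ x > (0 : ℝ), DifferentiableAt ℝ ρ x)
    (hlim : Tendsto ρ atTop (nhds ϱ))
    (hslow : Tendsto (fun x : ℝ => x * Real.log x * deriv ρ x) atTop (nhds 0))
    (f g : ℝ → ℝ) (hf : ∀ x > (0 : ℝ), 0 < f x) (hg : ∀ x > (0 : ℝ), 0 < g x)
    (r : ℕ → ℝ) (hrpos : ∀ m, 0 < r m) (hrtop : Tendsto r atTop atTop)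
    (σ : ℝ) (hσ : 0 < σ)
    (htype : Tendsto (fun m => g (r m) / (r m) ^ ρ (r m)) atTop (nhds σ))
    (α₀ : ℝ) (hα₀ : 0 < α₀) (a : ℝ) (ha : 0 < a)
    (hlimsup : (a : EReal) ≤
      Filter.limsup (fun m => ((f (α₀ * r m) / g (r m) : ℝ) : EReal)) atTop) :
    ((a * σ / α₀ ^ ϱ : ℝ) : EReal) ≤
      Filter.limsup (fun x : ℝ => ((f x / x ^ ρ x : ℝ) : EReal)) atTop := by
  have hstop : Tendsto (fun m => α₀ * r m) atTop atTop := hrtop.const_mul_atTop hα₀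
  -- ρ(α₀ r_m) → ϱ
  have h1 : Tendsto (fun m => ρ (α₀ * r m)) atTop (nhds ϱ) := hlim.comp hstop
  -- log(r_m) * (ρ(α₀ r_m) - ρ(r_m)) → 0
  have h2 : Tendsto (fun m => Real.log (r m) * (ρ (α₀ * r m) - ρ (r m))) atTop (nhds 0) :=
    (slowkey_aux ρ hdiff hslow α₀ hα₀).comp hrtop
  -- the ratio r_m^{ρ(r_m)} / (α₀ r_m)^{ρ(α₀ r_m)} tends to α₀^{-ϱ}
  have hratio : Tendsto
      (fun m => (r m) ^ ρ (r m) / (α₀ * r m) ^ ρ (α₀ * r m)) atTop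
      (nhds (α₀ ^ (-ϱ))) := by
    have heq : ∀ m, (r m) ^ ρ (r m) / (α₀ * r m) ^ ρ (α₀ * r m) =
        Real.exp (-(Real.log (r m) * (ρ (α₀ * r m) - ρ (r m))) - ρ (α₀ * r m) * Real.log α₀) := by
      intro m
      have hrm := hrpos m
      have hsm : 0 < α₀ * r m := by positivity
      rw [Real.rpow_def_of_pos hrm, Real.rpow_def_of_pos hsm, ← Real.exp_sub]
      congr 1
      rw [Real.log_mul (ne_of_gt hα₀) (ne_of_gt hrm)]
      ring
    simp only [heq]
    have hexp : Tendsto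
        (fun m => -(Real.log (r m) * (ρ (α₀ * r m) - ρ (r m))) - ρ (α₀ * r m) * Real.log α₀)
        atTop (nhds (-(0:ℝ) - ϱ * Real.log α₀)) :=
      (h2.neg).sub (h1.mul_const _)
    have := (Real.continuous_exp.tendsto _).comp hexp
    simp only [Function.comp_def] at this
    convert this using 2
    rw [Real.rpow_def_of_pos hα₀]
    ring_nf
  -- c_m := g(r_m) / (α₀ r_m)^{ρ(α₀ r_m)} → σ * α₀^{-ϱ} =: L0
  set L0 : ℝ := σ * α₀ ^ (-ϱ) with hL0def
  have hL0pos : 0 < L0 := mul_pos hσ (Real.rpow_pos_of_pos hα₀ _)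
  have hcm : Tendsto (fun m => g (r m) / (α₀ * r m) ^ ρ (α₀ * r m)) atTop (nhds L0) := by
    have heq : ∀ m, g (r m) / (α₀ * r m) ^ ρ (α₀ * r m) =
        (g (r m) / (r m) ^ ρ (r m)) * ((r m) ^ ρ (r m) / (α₀ * r m) ^ ρ (α₀ * r m)) := by
      intro m
      have h3 : (r m) ^ ρ (r m) ≠ 0 := ne_of_gt (Real.rpow_pos_of_pos (hrpos m) _)
      field_simp
    simp only [heq]
    exact htype.mul hratio
  -- target equals a * L0
  have htarget : a * σ / α₀ ^ ϱ = a * L0 := by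
    rw [hL0def, Real.rpow_neg hα₀.le]
    field_simp
  -- Step B : for any real b < a * L0, b ≤ limsup along the sequence α₀ * r m
  have stepB : ∀ b : ℝ, b < a * L0 →
      (b : EReal) ≤ Filter.limsup
        (fun m => ((f (α₀ * r m) / (α₀ * r m) ^ ρ (α₀ * r m) : ℝ) : EReal)) atTop := by
    intro b hb
    set ε : ℝ := min (a / 2) (min (L0 / 2) ((a * L0 - b) / (a + L0))) with hεdef
    have hεpos : 0 < ε := by
      apply lt_min (by positivity)
      apply lt_min (by positivity)
      have : 0 < a * L0 - b := by linarith
      positivity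
    have hεa : ε ≤ a / 2 := min_le_left _ _
    have hεL : ε ≤ L0 / 2 := le_trans (min_le_right _ _) (min_le_left _ _)
    have hεb : ε ≤ (a * L0 - b) / (a + L0) := le_trans (min_le_right _ _) (min_le_right _ _)
    have hεb' : ε * (a + L0) ≤ a * L0 - b := by
      rw [div_eq_mul_inv] at hεb
      have haL : 0 < a + L0 := by linarith
      calc ε * (a + L0) ≤ (a * L0 - b) * (a + L0)⁻¹ * (a + L0) :=
            mul_le_mul_of_nonneg_right hεb haL.le
        _ = a * L0 - b := by field_simp
    -- frequently a - ε < f(α₀ r_m)/g(r_m)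
    have hfa : ∃ᶠ m in atTop, ((a - ε : ℝ) : EReal) <
        ((f (α₀ * r m) / g (r m) : ℝ) : EReal) := by
      refine frequently_lt_of_lt_limsup (by isBoundedDefault) ?_
      exact lt_of_lt_of_le (EReal.coe_lt_coe_iff.2 (show a - ε < a by linarith)) hlimsup
    -- eventually L0 - ε ≤ c_m
    have hev : ∀ᶠ m in atTop, L0 - ε ≤ g (r m) / (α₀ * r m) ^ ρ (α₀ * r m) :=
      hcm.eventually (eventually_ge_nhds (by linarith))
    refine le_limsup_of_frequently_le ?_
    refine (hfa.and_eventually hev).mono ?_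
    rintro m ⟨hm1, hm2⟩
    rw [EReal.coe_lt_coe_iff] at hm1
    rw [EReal.coe_le_coe_iff]
    have hrm := hrpos m
    have hsm : 0 < α₀ * r m := by positivity
    have hgm : 0 < g (r m) := hg _ hrm
    have heq : f (α₀ * r m) / (α₀ * r m) ^ ρ (α₀ * r m) =
        (f (α₀ * r m) / g (r m)) * (g (r m) / (α₀ * r m) ^ ρ (α₀ * r m)) := by
      field_simp
    rw [heq]
    have h4 : 0 < a - ε := by linarith
    have h5 : 0 < L0 - ε := by linarith
    calc b ≤ (a - ε) * (L0 - ε) := by nlinarith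
      _ ≤ (f (α₀ * r m) / g (r m)) * (g (r m) / (α₀ * r m) ^ ρ (α₀ * r m)) := by
          exact mul_le_mul hm1.le hm2 h5.le (le_of_lt (div_pos (hf _ hsm) hgm))
  -- Step A : the limsup along the sequence is at most the limsup at infinity
  have stepA : Filter.limsup
        (fun m => ((f (α₀ * r m) / (α₀ * r m) ^ ρ (α₀ * r m) : ℝ) : EReal)) atTop ≤
      Filter.limsup (fun x : ℝ => ((f x / x ^ ρ x : ℝ) : EReal)) atTop := by
    have : (fun m => ((f (α₀ * r m) / (α₀ * r m) ^ ρ (α₀ * r m) : ℝ) : EReal)) =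
        (fun x : ℝ => ((f x / x ^ ρ x : ℝ) : EReal)) ∘ (fun m => α₀ * r m) := rfl
    rw [this, limsup_comp]
    exact limsup_le_limsup_of_le hstop
  -- combine via density
  apply le_of_forall_lt_imp_le_of_dense
  intro z hz
  obtain ⟨y, hy1, hy2⟩ := EReal.exists_between_coe_real hz
  have hyR : y < a * L0 := by
    rw [← htarget]
    exact EReal.coe_lt_coe_iff.1 hy2
  exact le_trans hy1.le (le_trans (stepB y hyR) stepA)
end

section
/- Let (Ω, 𝒜, μ) be a measure space and A ∈ 𝒜 with 0 < μ(A) < ∞. Let (g_m) be a sequence of measurable functions g_m : Ω → (0,∞), and let (c_m) and (d_m) be sequences of positive real numbers such that ∫_A g_m dμ ≤ d_m for every m, and such that for every L ∈ A the sequence c_m/g_m(L) tends to 0 as m → ∞. Then c_m/d_m → 0 as m → ∞. -/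
open MeasureTheory Filter

/-- Measure-theoretic core of Lemma 2.6: if `∫_A g_m dμ ≤ d_m` and
`c_m/g_m(L) → 0` for every `L ∈ A`, where `0 < μ(A) < ⊤`, then `c_m/d_m → 0`. -/
theorem stmt_8 {Ω : Type*} [MeasurableSpace Ω] (μ : Measure Ω)
    (A : Set Ω) (hA : MeasurableSet A) (hA0 : 0 < μ A) (hAfin : μ A < ⊤)
    (g : ℕ → Ω → ℝ) (hmeas : ∀ m, Measurable (g m))
    (hgpos : ∀ m L, 0 < g m L)
    (c d : ℕ → ℝ) (hc : ∀ m, 0 < c m) (hd : ∀ m, 0 < d m)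
    (hint : ∀ m, ∫⁻ L in A, ENNReal.ofReal (g m L) ∂μ ≤ ENNReal.ofReal (d m))
    (hconv : ∀ L ∈ A, Tendsto (fun m => c m / g m L) atTop (nhds 0)) :
    Tendsto (fun m => c m / d m) atTop (nhds 0) := by
  set D : ℕ → ENNReal := fun m => ENNReal.ofReal (d m) / ENNReal.ofReal (c m) with hDdef
  -- Step 1: liminf D = ⊤ via Fatou
  have hFmeas : ∀ m, Measurable fun L => ENNReal.ofReal (g m L) / ENNReal.ofReal (c m) :=
    fun m => (hmeas m).ennreal_ofReal.div_const _
  have key : atTop.liminf D = ⊤ := by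
    refine top_le_iff.mp ?_
    have h1 : (∫⁻ _ in A, (⊤ : ENNReal) ∂μ) = ⊤ := by
      rw [setLIntegral_const]
      exact ENNReal.top_mul hA0.ne'
    calc (⊤ : ENNReal) = ∫⁻ _ in A, (⊤ : ENNReal) ∂μ := h1.symm
      _ = ∫⁻ L in A,
            atTop.liminf (fun m => ENNReal.ofReal (g m L) / ENNReal.ofReal (c m)) ∂μ := by
          refine setLIntegral_congr_fun hA (fun L hL => ?_)
          have h0 : Tendsto (fun m => c m / g m L) atTop (nhds 0) := hconv L hL
          have hpos : ∀ᶠ m in atTop, c m / g m L ∈ Set.Ioi (0:ℝ) :=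
            Filter.Eventually.of_forall fun m => div_pos (hc m) (hgpos m L)
          have h0' : Tendsto (fun m => c m / g m L) atTop (nhdsWithin 0 (Set.Ioi 0)) :=
            tendsto_nhdsWithin_of_tendsto_nhds_of_eventually_within _ h0 hpos
          have hgc : Tendsto (fun m => g m L / c m) atTop atTop := by
            have := h0'.inv_tendsto_nhdsGT_zero
            simpa [Pi.inv_def, inv_div] using this
          have hT : Tendsto (fun m => ENNReal.ofReal (g m L / c m)) atTop (nhds ⊤) :=
            ENNReal.tendsto_ofReal_atTop.comp hgc
          have heq : (fun m => ENNReal.ofReal (g m L / c m))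
              = fun m => ENNReal.ofReal (g m L) / ENNReal.ofReal (c m) := by
            funext m; exact ENNReal.ofReal_div_of_pos (hc m)
          rw [heq] at hT
          exact hT.liminf_eq.symm
      _ ≤ atTop.liminf
            (fun m => ∫⁻ L in A, ENNReal.ofReal (g m L) / ENNReal.ofReal (c m) ∂μ) :=
          lintegral_liminf_le hFmeas
      _ ≤ atTop.liminf D := by
          refine liminf_le_liminf (Filter.Eventually.of_forall fun m => ?_) ?_ ?_
          · have : (∫⁻ L in A, ENNReal.ofReal (g m L) / ENNReal.ofReal (c m) ∂μ)
                = (∫⁻ L in A, ENNReal.ofReal (g m L) ∂μ) * (ENNReal.ofReal (c m))⁻¹ := by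
              simp_rw [div_eq_mul_inv]
              exact lintegral_mul_const _ (hmeas m).ennreal_ofReal
            rw [this, hDdef]
            simp only [div_eq_mul_inv]
            exact mul_le_mul_left (hint m) _
          · isBoundedDefault
          · isBoundedDefault
  have hD : Tendsto D atTop (nhds ⊤) := by
    refine tendsto_of_liminf_eq_limsup key (top_le_iff.mp ?_) ?_ ?_
    · rw [← key]; exact liminf_le_limsup
    · isBoundedDefault
    · isBoundedDefault
  -- Step 2: d m / c m → ∞ in ℝ
  have hdc : Tendsto (fun m => d m / c m) atTop atTop := by
    rw [tendsto_atTop]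
    intro b
    have hb : ∀ᶠ m in atTop, ENNReal.ofReal b < D m :=
      hD.eventually (eventually_gt_nhds (ENNReal.ofReal_lt_top))
    filter_upwards [hb] with m hm
    by_contra h
    push_neg at h
    have : D m ≤ ENNReal.ofReal b := by
      show ENNReal.ofReal (d m) / ENNReal.ofReal (c m) ≤ ENNReal.ofReal b
      rw [show ENNReal.ofReal (d m) / ENNReal.ofReal (c m)
          = ENNReal.ofReal (d m / c m) from (ENNReal.ofReal_div_of_pos (hc m)).symm]
      exact ENNReal.ofReal_le_ofReal h.le
    exact absurd hm this.not_gt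
  have := hdc.inv_tendsto_atTop
  simpa [Pi.inv_def, inv_div] using this
end

section
/- Let f, g : (0,∞) → [0,∞), let r > e^e be a real number, and assume g is upper semicontinuous at every point of [r, 2r]. Suppose that for every integer s ≥ 2 one has f(r) ≤ (log((1+1/s)·r))^{1+(log(log r))^{(1/s)−1}} · g((1+1/s)·r). Then f(r) ≤ e·(log r)·g(r). -/
open Real Filter Topology

/-- Limiting step (s → ∞) in the proof of Lemma 2.7: for `r > e^e` and `g`
upper semicontinuous on `[r, 2r]`, the family of inequalities
`f(r) ≤ (log((1+1/s)r))^{1+(log log r)^{1/s−1}} · g((1+1/s)r)` for all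
integers `s ≥ 2` implies `f(r) ≤ e·(log r)·g(r)`. -/
theorem stmt_12 (f g : ℝ → ℝ)
    (hf : ∀ x > (0 : ℝ), 0 ≤ f x) (hg : ∀ x > (0 : ℝ), 0 ≤ g x)
    (r : ℝ) (hr : Real.exp (Real.exp 1) < r)
    (husc : ∀ x ∈ Set.Icc r (2 * r), UpperSemicontinuousAt g x)
    (hyp : ∀ s : ℕ, 2 ≤ s →
      f r ≤ (Real.log ((1 + 1 / (s : ℝ)) * r)) ^
          (1 + (Real.log (Real.log r)) ^ (1 / (s : ℝ) - 1))
        * g ((1 + 1 / (s : ℝ)) * r)) :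
    f r ≤ Real.exp 1 * Real.log r * g r := by
  have he1 : (1:ℝ) < Real.exp 1 := by
    have := Real.exp_one_gt_d9; linarith
  have hr0 : (0:ℝ) < r := lt_trans (Real.exp_pos _) hr
  have hr1 : (1:ℝ) < r := lt_trans (by calc (1:ℝ) < Real.exp 1 := he1
    _ < Real.exp (Real.exp 1) := Real.exp_lt_exp.2 (by linarith)) hr
  have hlogr : Real.exp 1 < Real.log r := by
    rw [← Real.log_exp (Real.exp 1)]
    exact Real.log_lt_log (Real.exp_pos _) hr
  have hlr0 : (0:ℝ) < Real.log r := by linarith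
  set b := Real.log (Real.log r) with hb
  have hb1 : (1:ℝ) < b := by
    rw [hb, ← Real.log_exp 1]
    exact Real.log_lt_log (Real.exp_pos _) hlogr
  have hb0 : (0:ℝ) < b := by linarith
  -- convergence of the arguments
  have hts : Tendsto (fun s : ℕ => (1 + 1/(s:ℝ)) * r) atTop (𝓝 r) := by
    have h1 : Tendsto (fun s:ℕ => 1 + 1/(s:ℝ)) atTop (𝓝 1) := by
      simpa using tendsto_const_nhds.add (tendsto_one_div_atTop_nhds_zero_nat (𝕜 := ℝ))
    simpa using h1.mul_const r
  have hlog : Tendsto (fun s:ℕ => Real.log ((1+1/(s:ℝ))*r)) atTop (𝓝 (Real.log r)) :=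
    (Real.continuousAt_log (ne_of_gt hr0)).tendsto.comp hts
  have hexp : Tendsto (fun s:ℕ => 1 + b ^ (1/(s:ℝ) - 1)) atTop (𝓝 (1 + b ^ (-1:ℝ))) := by
    have h1 : Tendsto (fun s:ℕ => 1/(s:ℝ) - 1) atTop (𝓝 (-1)) := by
      simpa using (tendsto_one_div_atTop_nhds_zero_nat (𝕜 := ℝ)).sub_const 1
    have h2 : Tendsto (fun s:ℕ => b ^ (1/(s:ℝ) - 1)) atTop (𝓝 (b ^ (-1:ℝ))) :=
      Filter.Tendsto.rpow tendsto_const_nhds h1 (Or.inl (ne_of_gt hb0))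
    exact tendsto_const_nhds.add h2
  have hval : (Real.log r) ^ (1 + b ^ (-1:ℝ)) = Real.exp 1 * Real.log r := by
    rw [Real.rpow_add hlr0, Real.rpow_one, Real.rpow_neg_one,
      Real.rpow_def_of_pos hlr0, ← hb, mul_inv_cancel₀ (ne_of_gt hb0)]
    ring
  have hA : Tendsto (fun s:ℕ => (Real.log ((1+1/(s:ℝ))*r)) ^ (1 + b ^ (1/(s:ℝ)-1)))
      atTop (𝓝 (Real.exp 1 * Real.log r)) := by
    have := Filter.Tendsto.rpow hlog hexp (Or.inl (ne_of_gt hlr0))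
    rwa [hval] at this
  -- main bound for each y > g r
  have key : ∀ y, g r < y → f r ≤ Real.exp 1 * Real.log r * y := by
    intro y hy
    have hrmem : r ∈ Set.Icc r (2*r) := ⟨le_refl r, by linarith⟩
    have hev : ∀ᶠ s : ℕ in atTop, g ((1+1/(s:ℝ))*r) < y :=
      hts.eventually ((husc r hrmem) y hy)
    have hev2 : ∀ᶠ s : ℕ in atTop,
        f r ≤ (Real.log ((1+1/(s:ℝ))*r)) ^ (1 + b ^ (1/(s:ℝ)-1)) * y := by
      filter_upwards [hev, eventually_ge_atTop 2] with s hs hs2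
      have hs0 : (0:ℝ) ≤ 1/(s:ℝ) := by positivity
      have hx1 : (1:ℝ) ≤ (1+1/(s:ℝ))*r := by nlinarith
      have hA0 : (0:ℝ) ≤ (Real.log ((1+1/(s:ℝ))*r)) ^ (1 + b ^ (1/(s:ℝ)-1)) :=
        Real.rpow_nonneg (Real.log_nonneg hx1) _
      calc f r ≤ (Real.log ((1+1/(s:ℝ))*r)) ^ (1 + b ^ (1/(s:ℝ)-1))
            * g ((1+1/(s:ℝ))*r) := hyp s hs2
        _ ≤ _ := mul_le_mul_of_nonneg_left (le_of_lt hs) hA0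
    exact ge_of_tendsto (hA.mul_const y) hev2
  have hC0 : (0:ℝ) < Real.exp 1 * Real.log r := by positivity
  refine le_of_forall_pos_le_add ?_
  intro ε hε
  calc f r ≤ Real.exp 1 * Real.log r * (g r + ε / (Real.exp 1 * Real.log r)) := by
        apply key; nlinarith [div_pos hε hC0]
    _ = Real.exp 1 * Real.log r * g r + ε := by field_simp
end
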